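/- With the same construction of H from G (M > ∑_e p_e), let M_H be a maximum weight matching in H, assume some matching of G matches at least ρ_g vertices of each V_g (feasibility), and let M = M_H ∩ E(G). Then ∑_{e∈M} p_e equals the minimum of ∑_{e∈M'} p_e over all matchings M' of G matching at least ρ_g vertices of each V_g. -/

import Mathlib

open Finset

/-- A matching in a graph given by its edge set `EX`: a subset of edges, pairwise
vertex-disjoint. -/
def IsMatching {X : Type*} (EX M : Finset (Sym2 X)) : Prop :=
  M ⊆ EX ∧ ∀ e ∈ M, ∀ e' ∈ M, e ≠ e' → ∀ x : X, ¬(x ∈ e ∧ x ∈ e')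

lemma aux_card_two {X : Type*} [Fintype X] [DecidableEq X] {e : Sym2 X} (h : ¬ e.IsDiag) :
    (univ.filter (· ∈ e)).card = 2 := by
  induction e using Sym2.inductionOn with
  | hf x y =>
    rw [Sym2.mk_isDiag_iff] at h
    have : (univ.filter (· ∈ s(x, y))) = {x, y} := by
      ext z; simp [Sym2.mem_iff]
    rw [this, card_insert_of_notMem (by simp [h]), card_singleton]

open scoped Classical in
lemma aux_cover_card {X Y : Type*} [Fintype Y] (N : Finset (Sym2 X))
    (hN : ∀ e ∈ N, ∀ e' ∈ N, e ≠ e' → ∀ x : X, ¬(x ∈ e ∧ x ∈ e')) (ι : Y → X) (q : Y → Prop) :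
    (univ.filter fun y => q y ∧ ∃ e ∈ N, ι y ∈ e).card
      = ∑ e ∈ N, (univ.filter fun y => q y ∧ ι y ∈ e).card := by
  classical
  have : (univ.filter fun y => q y ∧ ∃ e ∈ N, ι y ∈ e)
      = N.biUnion (fun e => univ.filter fun y => q y ∧ ι y ∈ e) := by
    ext y; simp [mem_biUnion]; tauto
  rw [this, card_biUnion]
  intro e he e' he' hne
  simp only [disjoint_left, mem_filter]
  rintro y ⟨-, hy⟩ ⟨-, hy'⟩
  exact hN e he e' he' hne (ι y) ⟨hy.2, hy'.2⟩

lemma aux_cover_card' {X Y : Type*} [Fintype Y] [DecidableEq X] (N : Finset (Sym2 X))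
    (hN : ∀ e ∈ N, ∀ e' ∈ N, e ≠ e' → ∀ x : X, ¬(x ∈ e ∧ x ∈ e')) (ι : Y → X) :
    (univ.filter fun y => ∃ e ∈ N, ι y ∈ e).card
      = ∑ e ∈ N, (univ.filter fun y => ι y ∈ e).card := by
  classical
  have : (univ.filter fun y => ∃ e ∈ N, ι y ∈ e)
      = N.biUnion (fun e => univ.filter fun y => ι y ∈ e) := by
    ext y; simp [mem_biUnion]
  rw [this, card_biUnion]
  intro e he e' he' hne
  simp only [disjoint_left, mem_filter]
  rintro y ⟨-, hy⟩ ⟨-, hy'⟩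
  exact hN e he e' he' hne (ι y) ⟨hy, hy'⟩

open scoped Classical in
/-- in the construction of `H` from `G`, if `M_H` is a maximum weight
matching of `H` and the budgeted matching problem on `G` is feasible, then the trace
`M = M_H ∩ E(G)` has `p`-weight equal to the minimum `p`-weight of a matching of `G`
matching at least `ρ_g` vertices of each group `V_g`. -/
theorem max_matching_trace_optimal
    {V A : Type*} [Fintype V] [Fintype A] [DecidableEq V] [DecidableEq A]
    (ω : ℕ) (part : V → Fin ω) (grp : A → Fin ω) (ρ : Fin ω → ℕ)
    (hρ : ∀ g, ρ g ≤ (univ.filter fun v => part v = g).card)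
    (haux : ∀ g, (univ.filter fun a => grp a = g).card
        = (univ.filter fun v => part v = g).card - ρ g)
    (EG : Finset (Sym2 V)) (hEGsimple : ∀ e ∈ EG, ¬ e.IsDiag)
    (p : Sym2 V → ℝ) (hp : ∀ e, 0 ≤ p e)
    (M : ℝ) (hM : ∑ e ∈ EG, p e < M)
    (EH : Finset (Sym2 (V ⊕ A)))
    (hEH : ∀ e : Sym2 (V ⊕ A), e ∈ EH ↔
      (∃ e0 ∈ EG, e = e0.map Sum.inl) ∨
      (∃ (v : V) (a : A), part v = grp a ∧ e = s(Sum.inl v, Sum.inr a)))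
    (wH : Sym2 (V ⊕ A) → ℝ)
    (hwH1 : ∀ e0 ∈ EG, wH (e0.map Sum.inl) = 2 * M - p e0)
    (hwH2 : ∀ (v : V) (a : A), wH s(Sum.inl v, Sum.inr a) = M)
    (MH : Finset (Sym2 (V ⊕ A))) (hMH : IsMatching EH MH)
    (hmax : ∀ M' : Finset (Sym2 (V ⊕ A)), IsMatching EH M' →
      ∑ e ∈ M', wH e ≤ ∑ e ∈ MH, wH e)
    (hfeas : ∃ M' : Finset (Sym2 V), IsMatching EG M' ∧
      ∀ g, ρ g ≤ (univ.filter fun v => part v = g ∧ ∃ e ∈ M', v ∈ e).card) :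
    IsLeast
      {c : ℝ | ∃ M' : Finset (Sym2 V), IsMatching EG M' ∧
        (∀ g, ρ g ≤ (univ.filter fun v => part v = g ∧ ∃ e ∈ M', v ∈ e).card) ∧
        c = ∑ e ∈ M', p e}
      (∑ e0 ∈ EG.filter (fun e0 => Sym2.map Sum.inl e0 ∈ MH), p e0) := by
  classical
  obtain ⟨hMHsub, hMHdisj⟩ := hMH
  set tr : Finset (Sym2 V) := EG.filter (fun e0 => Sym2.map Sum.inl e0 ∈ MH) with htr
  set n : ℕ := Fintype.card V with hn
  have hM0 : (0:ℝ) < M := lt_of_le_of_lt (Finset.sum_nonneg fun e _ => hp e) hM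
  have hinl : Function.Injective (Sum.inl : V → V ⊕ A) := Sum.inl_injective
  have hinj2 : Function.Injective (Sym2.map (Sum.inl : V → V ⊕ A)) := Sym2.map.injective hinl
  -- trace is a matching of G
  have htrmatch : IsMatching EG tr := by
    constructor
    · exact filter_subset _ _
    · intro e he e' he' hne x hx
      have h1 : Sym2.map Sum.inl e ∈ MH := (mem_filter.mp he).2
      have h2 : Sym2.map Sum.inl e' ∈ MH := (mem_filter.mp he').2
      exact hMHdisj _ h1 _ h2 (fun h => hne (hinj2 h)) (Sum.inl x)
        ⟨Sym2.mem_map.mpr ⟨x, hx.1, rfl⟩, Sym2.mem_map.mpr ⟨x, hx.2, rfl⟩⟩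
  -- split MH
  set isImg : Sym2 (V ⊕ A) → Prop := fun e => ∃ e0 ∈ EG, e = e0.map Sum.inl with hisImg
  set MHE := MH.filter isImg with hMHE
  set MHX := MH.filter (fun e => ¬ isImg e) with hMHX
  have hMHEeq : MHE = tr.image (Sym2.map Sum.inl) := by
    ext e
    simp only [hMHE, mem_filter, mem_image, htr, hisImg]
    constructor
    · rintro ⟨heMH, e0, he0, rfl⟩
      exact ⟨e0, ⟨he0, heMH⟩, rfl⟩
    · rintro ⟨e0, ⟨he0, hmem⟩, rfl⟩
      exact ⟨hmem, e0, he0, rfl⟩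
  have hMHXform : ∀ e ∈ MHX, ∃ v a, part v = grp a ∧ e = s(Sum.inl v, Sum.inr a) := by
    intro e he
    have := (hEH e).mp (hMHsub (mem_filter.mp he).1)
    rcases this with h | h
    · exact absurd h (mem_filter.mp he).2
    · exact h
  have hMHEcard : MHE.card = tr.card := by
    rw [hMHEeq, card_image_of_injective _ hinj2]
  -- weight identity
  have hsumE : ∑ e ∈ MHE, wH e = 2 * M * tr.card - ∑ e0 ∈ tr, p e0 := by
    rw [hMHEeq, Finset.sum_image (fun a _ b _ h => hinj2 h)]
    rw [Finset.sum_congr rfl (fun e0 he0 => hwH1 e0 (mem_filter.mp he0).1)]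
    rw [Finset.sum_sub_distrib, Finset.sum_const, nsmul_eq_mul]
    ring
  have hsumX : ∑ e ∈ MHX, wH e = M * MHX.card := by
    have h1 : ∑ e ∈ MHX, wH e = ∑ _e ∈ MHX, M :=
      Finset.sum_congr rfl (fun e he => by
        obtain ⟨v, a, _, rfl⟩ := hMHXform e he
        exact hwH2 v a)
    rw [h1, Finset.sum_const, nsmul_eq_mul]; ring
  have hsumMH : ∑ e ∈ MH, wH e = ∑ e ∈ MHE, wH e + ∑ e ∈ MHX, wH e :=
    (Finset.sum_filter_add_sum_filter_not MH isImg wH).symm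
  -- covered vertex count
  set covN : ℕ := (univ.filter fun v : V => ∃ e ∈ MH, Sum.inl v ∈ e).card with hcovN
  have hcov_eq : covN = 2 * tr.card + MHX.card := by
    have h0 : covN = ∑ e ∈ MH, (univ.filter fun v : V => Sum.inl v ∈ e).card := by
      rw [hcovN]
      convert aux_cover_card' MH hMHdisj Sum.inl using 2 <;> congr!
    rw [h0, ← Finset.sum_filter_add_sum_filter_not MH isImg, ← hMHE, ← hMHX]
    have h1 : ∑ e ∈ MHE, (univ.filter fun v : V => Sum.inl v ∈ e).card
        = 2 * tr.card := by
      have h2 : ∀ e ∈ MHE, (univ.filter fun v : V => Sum.inl v ∈ e).card = 2 := by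
        intro e he
        obtain ⟨heMH, e0, he0, rfl⟩ := mem_filter.mp he
        have hfe : (univ.filter fun v : V => (Sum.inl v : V ⊕ A) ∈ Sym2.map Sum.inl e0)
            = univ.filter (· ∈ e0) := by
          ext v; simp [Sym2.mem_map]
        rw [hfe]
        exact aux_card_two (hEGsimple e0 he0)
      rw [Finset.sum_congr rfl h2, Finset.sum_const, smul_eq_mul, hMHEcard, Nat.mul_comm]
    have h3 : ∑ e ∈ MHX, (univ.filter fun v : V => Sum.inl v ∈ e).card
        = MHX.card := by
      have h4 : ∀ e ∈ MHX, (univ.filter fun v : V => Sum.inl v ∈ e).card = 1 := by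
        intro e he
        obtain ⟨v, a, _, rfl⟩ := hMHXform e he
        have hfe : (univ.filter fun w : V => Sum.inl w ∈ s(Sum.inl v, Sum.inr a))
            = {v} := by
          ext w; simp [Sym2.mem_iff]
        rw [hfe, card_singleton]
      rw [Finset.sum_congr rfl h4, Finset.sum_const, smul_eq_mul, Nat.mul_one]
    rw [h1, h3]
  have hweight : ∑ e ∈ MH, wH e = M * covN - ∑ e0 ∈ tr, p e0 := by
    rw [hsumMH, hsumE, hsumX, hcov_eq]
    push_cast; ring
  -- extension bound
  have hext : ∀ M' : Finset (Sym2 V), IsMatching EG M' →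
      (∀ g, ρ g ≤ (univ.filter fun v => part v = g ∧ ∃ e ∈ M', v ∈ e).card) →
      (n : ℝ) * M - ∑ e ∈ M', p e ≤ ∑ e ∈ MH, wH e := by
    intro M' hm hcov
    obtain ⟨hm_sub, hm_disj⟩ := hm
    set U : Finset V := univ.filter (fun v => ¬ ∃ e ∈ M', v ∈ e) with hU
    have hmc : (univ.filter fun v : V => ∃ e ∈ M', v ∈ e).card = 2 * M'.card := by
      have h0 := aux_cover_card' M' hm_disj (id : V → V)
      simp only [id_eq] at h0
      have h1 : ∀ e ∈ M', (univ.filter fun y : V => y ∈ e).card = 2 :=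
        fun e he => aux_card_two (hEGsimple e (hm_sub he))
      rw [Finset.sum_congr rfl h1, Finset.sum_const, smul_eq_mul, Nat.mul_comm] at h0
      convert h0 using 2 <;> congr!
    have hnsplit : (univ.filter fun v : V => ∃ e ∈ M', v ∈ e).card + U.card = n := by
      rw [hU, hn, ← card_univ]
      convert Finset.card_filter_add_card_filter_not
        (s := (univ : Finset V)) (p := fun v => ∃ e ∈ M', v ∈ e) using 3 <;> congr!
    have hUgle : ∀ g, (univ.filter fun v => part v = g ∧ ¬∃ e ∈ M', v ∈ e).card
        ≤ (univ.filter fun a => grp a = g).card := by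
      intro g
      have hsplitg := Finset.card_filter_add_card_filter_not
        (s := univ.filter fun v : V => part v = g) (p := fun v => ∃ e ∈ M', v ∈ e)
      rw [filter_filter, filter_filter] at hsplitg
      have h1 := hcov g
      have h2 := haux g
      have h3 := hρ g
      omega
    have hFex : ∀ g : Fin ω,
        Nonempty (↥(univ.filter fun v => part v = g ∧ ¬∃ e ∈ M', v ∈ e)
          ↪ ↥(univ.filter fun a => grp a = g)) := by
      intro g
      apply Function.Embedding.nonempty_of_card_le
      rw [Fintype.card_coe, Fintype.card_coe]
      exact hUgle g
    have F : ∀ g : Fin ω, ↥(univ.filter fun v => part v = g ∧ ¬∃ e ∈ M', v ∈ e)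
        ↪ ↥(univ.filter fun a => grp a = g) := fun g => (hFex g).some
    have hUmem : ∀ (g : Fin ω) (v : V), v ∈ U → part v = g →
        v ∈ univ.filter fun v => part v = g ∧ ¬∃ e ∈ M', v ∈ e := by
      intro g v hv hg
      exact mem_filter.mpr ⟨mem_univ _, hg, (mem_filter.mp hv).2⟩
    set f : {v // v ∈ U} → A :=
      fun v => (F (part v.1) ⟨v.1, hUmem (part v.1) v.1 v.2 rfl⟩).1 with hf
    have hfg : ∀ v : {v // v ∈ U}, grp (f v) = part v.1 := by
      intro v
      exact (mem_filter.mp (F (part v.1) ⟨v.1, hUmem (part v.1) v.1 v.2 rfl⟩).2).2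
    have hkey : ∀ (g : Fin ω) (v : V) (hv : v ∈ U) (hg : part v = g),
        f ⟨v, hv⟩ = (F g ⟨v, hUmem g v hv hg⟩).1 := by
      intro g v hv hg
      subst hg
      rfl
    have hfinj : Function.Injective f := by
      rintro ⟨v, hv⟩ ⟨w, hw⟩ hvw
      have h1 : part w = part v := by
        have h0 := hfg ⟨v, hv⟩
        have h2 := hfg ⟨w, hw⟩
        rw [← h0, ← h2, hvw]
      rw [hkey (part v) v hv rfl, hkey (part v) w hw h1] at hvw
      have h3 := (F (part v)).injective (Subtype.ext hvw)
      have h4 : v = w := congrArg Subtype.val h3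
      exact Subtype.ext h4
    set crossE : Finset (Sym2 (V ⊕ A)) :=
      U.attach.image (fun v => s(Sum.inl v.1, Sum.inr (f v))) with hcrossE
    have hcinj : Function.Injective
        (fun v : {v // v ∈ U} => s(Sum.inl v.1, (Sum.inr (f v) : V ⊕ A))) := by
      intro v w h
      rcases Sym2.eq_iff.mp h with ⟨h1, -⟩ | ⟨h1, -⟩
      · exact Subtype.ext (Sum.inl_injective h1)
      · exact (Sum.inl_ne_inr h1).elim
    have hdisjEX : Disjoint (M'.image (Sym2.map Sum.inl)) crossE := by
      rw [disjoint_left]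
      rintro e he hce
      obtain ⟨e0, he0, rfl⟩ := mem_image.mp he
      obtain ⟨u, -, hu⟩ := mem_image.mp hce
      have hmm : (Sum.inr (f u) : V ⊕ A) ∈ Sym2.map Sum.inl e0 := by
        rw [← hu]; exact Sym2.mem_mk_right _ _
      obtain ⟨b, -, hb⟩ := Sym2.mem_map.mp hmm
      exact (Sum.inl_ne_inr hb).elim
    set MX : Finset (Sym2 (V ⊕ A)) := M'.image (Sym2.map Sum.inl) ∪ crossE with hMX
    have hMXmatch : IsMatching EH MX := by
      constructor
      · intro e he
        rcases mem_union.mp he with he | he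
        · obtain ⟨e0, he0, rfl⟩ := mem_image.mp he
          exact (hEH _).mpr (Or.inl ⟨e0, hm_sub he0, rfl⟩)
        · obtain ⟨u, -, rfl⟩ := mem_image.mp he
          exact (hEH _).mpr (Or.inr ⟨u.1, f u, (hfg u).symm, rfl⟩)
      · intro e he e' he' hne x hx
        obtain ⟨hx1, hx2⟩ := hx
        rcases mem_union.mp he with he | he <;> rcases mem_union.mp he' with he' | he'
        · obtain ⟨e0, he0, rfl⟩ := mem_image.mp he
          obtain ⟨e0', he0', rfl⟩ := mem_image.mp he'
          obtain ⟨b, hb, hbx⟩ := Sym2.mem_map.mp hx1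
          obtain ⟨b', hb', hbx'⟩ := Sym2.mem_map.mp hx2
          obtain rfl : b = b' := Sum.inl_injective (hbx.trans hbx'.symm)
          exact hm_disj e0 he0 e0' he0' (fun h => hne (by rw [h])) b ⟨hb, hb'⟩
        · obtain ⟨e0, he0, rfl⟩ := mem_image.mp he
          obtain ⟨u, -, rfl⟩ := mem_image.mp he'
          obtain ⟨b, hb, hbx⟩ := Sym2.mem_map.mp hx1
          rcases Sym2.mem_iff.mp hx2 with h | h
          · have hbu : b = u.1 := Sum.inl_injective (hbx.trans h)
            subst hbu
            exact (mem_filter.mp u.2).2 ⟨e0, he0, hb⟩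
          · rw [← hbx] at h
            exact (Sum.inl_ne_inr h).elim
        · obtain ⟨u, -, rfl⟩ := mem_image.mp he
          obtain ⟨e0, he0, rfl⟩ := mem_image.mp he'
          obtain ⟨b, hb, hbx⟩ := Sym2.mem_map.mp hx2
          rcases Sym2.mem_iff.mp hx1 with h | h
          · have hbu : b = u.1 := Sum.inl_injective (hbx.trans h)
            subst hbu
            exact (mem_filter.mp u.2).2 ⟨e0, he0, hb⟩
          · rw [← hbx] at h
            exact (Sum.inl_ne_inr h).elim
        · obtain ⟨u, -, rfl⟩ := mem_image.mp he
          obtain ⟨u', -, rfl⟩ := mem_image.mp he'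
          have hune : u ≠ u' := fun h => hne (by rw [h])
          rcases Sym2.mem_iff.mp hx1 with h | h <;> rcases Sym2.mem_iff.mp hx2 with h' | h'
          · exact hune (Subtype.ext (Sum.inl_injective (h.symm.trans h')))
          · exact (Sum.inl_ne_inr (h.symm.trans h')).elim
          · exact (Sum.inl_ne_inr (h'.symm.trans h)).elim
          · exact hune (hfinj (Sum.inr_injective (h.symm.trans h')))
    have hsumimg : ∑ e ∈ M'.image (Sym2.map Sum.inl), wH e
        = 2 * M * M'.card - ∑ e ∈ M', p e := by
      rw [Finset.sum_image (fun a _ b _ h => hinj2 h),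
        Finset.sum_congr rfl (fun e0 he0 => hwH1 e0 (hm_sub he0)),
        Finset.sum_sub_distrib, Finset.sum_const, nsmul_eq_mul]
      ring
    have hsumcross : ∑ e ∈ crossE, wH e = M * U.card := by
      rw [hcrossE, Finset.sum_image (fun a _ b _ h => hcinj h)]
      have h1 : ∀ u ∈ U.attach, wH s(Sum.inl u.1, (Sum.inr (f u) : V ⊕ A)) = M :=
        fun u _ => hwH2 u.1 (f u)
      rw [Finset.sum_congr rfl h1, Finset.sum_const, card_attach, nsmul_eq_mul]
      ring
    have hcount : 2 * M'.card + U.card = n := by omega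
    have hsumMX : ∑ e ∈ MX, wH e = (n : ℝ) * M - ∑ e ∈ M', p e := by
      rw [hMX, Finset.sum_union hdisjEX, hsumimg, hsumcross, ← hcount]
      push_cast
      ring
    rw [← hsumMX]
    exact hmax MX hMXmatch
  -- all vertices covered
  have hcovn : covN = n := by
    obtain ⟨M0, hM0m, hM0cov⟩ := hfeas
    have h1 := hext M0 hM0m hM0cov
    have hsub : ∑ e ∈ M0, p e ≤ ∑ e ∈ EG, p e :=
      Finset.sum_le_sum_of_subset_of_nonneg hM0m.1 (fun e _ _ => hp e)
    have hP0 : (0:ℝ) ≤ ∑ e0 ∈ tr, p e0 := Finset.sum_nonneg fun e _ => hp e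
    have hle : covN ≤ n := by
      rw [hn, ← card_univ]; exact card_le_card (filter_subset _ _)
    have hgt : (n : ℝ) < (covN : ℝ) + 1 := by
      rw [hweight] at h1
      have : (n:ℝ) * M - M < M * covN := by nlinarith
      nlinarith
    have : n < covN + 1 := by exact_mod_cast hgt
    omega
  have hall : ∀ v : V, ∃ e ∈ MH, Sum.inl v ∈ e := by
    intro v
    have huniv : (univ.filter fun v : V => ∃ e ∈ MH, Sum.inl v ∈ e) = univ := by
      apply Finset.eq_univ_of_card
      rw [← hcovN, hcovn, hn]
    have hv : v ∈ (univ.filter fun v : V => ∃ e ∈ MH, Sum.inl v ∈ e) := by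
      rw [huniv]; exact mem_univ v
    exact (mem_filter.mp hv).2
  -- trace feasibility
  have htrfeas : ∀ g, ρ g ≤ (univ.filter fun v => part v = g ∧ ∃ e ∈ tr, v ∈ e).card := by
    intro g
    have hCle : (univ.filter fun v => part v = g ∧ ∃ a : A, s(Sum.inl v, Sum.inr a) ∈ MH).card
        ≤ (univ.filter fun a => grp a = g).card := by
      rcases isEmpty_or_nonempty A with hA | hA
      · have hempty : (univ.filter fun v => part v = g ∧ ∃ a : A, s(Sum.inl v, Sum.inr a) ∈ MH) = ∅ := by
          ext v
          simp only [mem_filter, mem_univ, true_and, notMem_empty, iff_false, not_and]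
          rintro - ⟨a, -⟩
          exact hA.elim a
        rw [hempty]; simp
      · have ha0 : Nonempty A := hA
        set f0 : V → A := fun v =>
          if h : ∃ a, s(Sum.inl v, Sum.inr a) ∈ MH then h.choose else Classical.arbitrary A with hf0
        have hedge : ∀ v, (h : ∃ a, s(Sum.inl v, Sum.inr a) ∈ MH) →
            s(Sum.inl v, Sum.inr (f0 v)) ∈ MH ∧ grp (f0 v) = part v := by
          intro v h
          have hfv : f0 v = h.choose := by rw [hf0]; exact dif_pos h
          have hmem : s(Sum.inl v, Sum.inr (f0 v)) ∈ MH := by rw [hfv]; exact h.choose_spec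
          refine ⟨hmem, ?_⟩
          rcases (hEH _).mp (hMHsub hmem) with ⟨e0, he0, heq⟩ | ⟨w, b, hgb, heq⟩
          · exfalso
            have : (Sum.inr (f0 v) : V ⊕ A) ∈ Sym2.map Sum.inl e0 := by
              rw [← heq]; exact Sym2.mem_mk_right _ _
            obtain ⟨b, -, hb⟩ := Sym2.mem_map.mp this
            exact (Sum.inl_ne_inr hb).elim
          · rcases Sym2.eq_iff.mp heq with ⟨h1, h2⟩ | ⟨h1, h2⟩
            · obtain rfl : v = w := Sum.inl_injective h1
              obtain rfl : f0 v = b := Sum.inr_injective h2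
              exact hgb.symm
            · exact (Sum.inl_ne_inr h1).elim
        apply card_le_card_of_injOn f0
        · intro v hv
          obtain ⟨-, hg, h⟩ := mem_filter.mp hv
          obtain ⟨-, hgrp⟩ := hedge v h
          exact mem_filter.mpr ⟨mem_univ _, by rw [hgrp, hg]⟩
        · intro v hv v' hv' heq
          obtain ⟨-, -, h⟩ := mem_filter.mp (mem_coe.mp hv)
          obtain ⟨-, -, h'⟩ := mem_filter.mp (mem_coe.mp hv')
          obtain ⟨hm, -⟩ := hedge v h
          obtain ⟨hm', -⟩ := hedge v' h'
          rw [heq] at hm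
          by_cases hee : s(Sum.inl v, Sum.inr (f0 v')) = s(Sum.inl v', Sum.inr (f0 v'))
          · rcases Sym2.eq_iff.mp hee with ⟨h1, -⟩ | ⟨h1, -⟩
            · exact Sum.inl_injective h1
            · exact (Sum.inl_ne_inr h1).elim
          · exact absurd ⟨Sym2.mem_mk_right _ _, Sym2.mem_mk_right _ _⟩
              (hMHdisj _ hm _ hm' hee (Sum.inr (f0 v')))
    have hsub : (univ.filter fun v => part v = g)
        ⊆ (univ.filter fun v => part v = g ∧ ∃ e ∈ tr, v ∈ e)
          ∪ (univ.filter fun v => part v = g ∧ ∃ a : A, s(Sum.inl v, Sum.inr a) ∈ MH) := by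
      intro v hv
      have hg : part v = g := (mem_filter.mp hv).2
      obtain ⟨e, heMH, hve⟩ := hall v
      rcases (hEH e).mp (hMHsub heMH) with ⟨e0, he0, rfl⟩ | ⟨w, a, hwa, rfl⟩
      · have hv0 : v ∈ e0 := by
          obtain ⟨b, hb, hbe⟩ := Sym2.mem_map.mp hve
          obtain rfl : b = v := Sum.inl_injective hbe
          exact hb
        exact mem_union_left _
          (mem_filter.mpr ⟨mem_univ v, hg, e0, mem_filter.mpr ⟨he0, heMH⟩, hv0⟩)
      · have hvw : v = w := by
          rcases Sym2.mem_iff.mp hve with h | h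
          · exact Sum.inl_injective h
          · exact (Sum.inl_ne_inr h).elim
        subst hvw
        exact mem_union_right _ (mem_filter.mpr ⟨mem_univ _, hg, a, heMH⟩)
    have hcards := le_trans (card_le_card hsub) (card_union_le _ _)
    have h1 := hρ g
    have h2 := haux g
    omega
  constructor
  · exact ⟨tr, htrmatch, htrfeas, rfl⟩
  · rintro c ⟨M', hm', hcov', rfl⟩
    have h1 := hext M' hm' hcov'
    rw [hweight, hcovn] at h1
    linarith
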